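/- Let ℓ : ℝⁿ → ℝ be a symmetric norm, let β ∈ (0,1), and let v₁, …, v_k ∈ ℝⁿ be vectors with pairwise disjoint supports. Set V = v₁ + ⋯ + v_k, let S = {i ∈ [k] : ℓ(vᵢ) ≥ β·ℓ(V)}, and let V' = Σ_{i∈S} vᵢ. Then (1 − kβ)·ℓ(V) ≤ ℓ(V') ≤ ℓ(V). -/

import Mathlib

open scoped Classical

/-- Removing non-β-contributing levels: let `ℓ` be a symmetric norm on `ℝⁿ`,
`β ∈ (0,1)`, and `v₁, …, v_k` vectors with pairwise disjoint supports summing to `V`.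
If `V'` is the sum of those `vᵢ` with `ℓ vᵢ ≥ β · ℓ V`, then
`(1 - k β) · ℓ V ≤ ℓ V' ≤ ℓ V`. -/
theorem contributing_levels (n k : ℕ) (ℓ : (Fin n → ℝ) → ℝ)
    (hzero : ∀ x : Fin n → ℝ, ℓ x = 0 ↔ x = 0)
    (hsmul : ∀ (c : ℝ) (x : Fin n → ℝ), ℓ (c • x) = |c| * ℓ x)
    (htri : ∀ x y : Fin n → ℝ, ℓ (x + y) ≤ ℓ x + ℓ y)
    (hperm : ∀ (σ : Equiv.Perm (Fin n)) (x : Fin n → ℝ), ℓ (x ∘ σ) = ℓ x)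
    (habs : ∀ x : Fin n → ℝ, ℓ (fun i => |x i|) = ℓ x)
    (β : ℝ) (hβ0 : 0 < β) (hβ1 : β < 1)
    (v : Fin k → (Fin n → ℝ))
    (hdisj : ∀ i j : Fin k, i ≠ j → ∀ t : Fin n, v i t = 0 ∨ v j t = 0)
    (V V' : Fin n → ℝ)
    (hV : V = ∑ i, v i)
    (hV' : V' = ∑ i ∈ Finset.univ.filter (fun i => β * ℓ V ≤ ℓ (v i)), v i) :
    (1 - k * β) * ℓ V ≤ ℓ V' ∧ ℓ V' ≤ ℓ V := by
  have h0 : ℓ 0 = 0 := (hzero 0).2 rfl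
  have hnn : ∀ x, 0 ≤ ℓ x := by
    intro x
    have hneg : ℓ (-x) = ℓ x := by
      have := hsmul (-1) x; simpa using this
    have h2 := htri x (-x)
    rw [add_neg_cancel, h0, hneg] at h2
    linarith
  -- key claim: each coordinate of V' equals the corresponding coordinate of V or is 0
  set S := Finset.univ.filter (fun i => β * ℓ V ≤ ℓ (v i)) with hS
  have hkey : ∀ t, V' t = V t ∨ V' t = 0 := by
    intro t
    by_cases h : ∃ i ∈ S, v i t ≠ 0
    · left
      obtain ⟨i, hiS, hivt⟩ := h
      have hothers : ∀ j : Fin k, j ≠ i → v j t = 0 := by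
        intro j hj
        rcases hdisj j i hj t with h1 | h1
        · exact h1
        · exact absurd h1 hivt
      have hVt : V t = v i t := by
        rw [hV]
        simp only [Finset.sum_apply]
        exact Finset.sum_eq_single i (fun j _ hj => hothers j hj)
          (by intro h; exact absurd (Finset.mem_univ i) h)
      have hV't : V' t = v i t := by
        rw [hV']
        simp only [Finset.sum_apply]
        exact Finset.sum_eq_single i (fun j _ hj => hothers j hj)
          (fun h => absurd hiS h)
      rw [hVt, hV't]
    · right
      push_neg at h
      rw [hV']
      simp only [Finset.sum_apply]
      exact Finset.sum_eq_zero (fun j hj => h j hj)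
  -- upper bound
  have habs' : ∀ x y : Fin n → ℝ, (∀ t, |x t| = |y t|) → ℓ x = ℓ y := by
    intro x y hxy
    rw [← habs x, ← habs y]
    congr 1
    exact funext hxy
  set w : Fin n → ℝ := fun t => 2 * V' t - V t with hw
  have hℓw : ℓ w = ℓ V := by
    apply habs'
    intro t
    rcases hkey t with h | h
    · have : w t = V t := by rw [hw]; simp only []; rw [h]; ring
      rw [this]
    · have : w t = -V t := by rw [hw]; simp only []; rw [h]; ring
      rw [this, abs_neg]
  have hupper : ℓ V' ≤ ℓ V := by
    have hsplit : V' = (1/2 : ℝ) • (V + w) := by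
      funext t
      have hwt : w t = 2 * V' t - V t := rfl
      simp only [Pi.smul_apply, Pi.add_apply, smul_eq_mul, hwt]
      ring
    rw [hsplit, hsmul]
    have := htri V w
    rw [hℓw] at this
    rw [abs_of_pos (by norm_num : (0:ℝ) < 1/2)]
    nlinarith
  refine ⟨?_, hupper⟩
  -- lower bound
  have hsum : V = V' + ∑ i ∈ Finset.univ.filter (fun i => ¬ (β * ℓ V ≤ ℓ (v i))), v i := by
    rw [hV', hS]
    conv_lhs => rw [hV]
    exact (Finset.sum_filter_add_sum_filter_not Finset.univ (fun i => β * ℓ V ≤ ℓ (v i)) v).symm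
  have hW : ℓ (∑ i ∈ Finset.univ.filter (fun i => ¬ (β * ℓ V ≤ ℓ (v i))), v i)
      ≤ (k : ℝ) * (β * ℓ V) := by
    have h1 : ℓ (∑ i ∈ Finset.univ.filter (fun i => ¬ (β * ℓ V ≤ ℓ (v i))), v i)
        ≤ ∑ i ∈ Finset.univ.filter (fun i => ¬ (β * ℓ V ≤ ℓ (v i))), ℓ (v i) :=
      Finset.le_sum_of_subadditive ℓ h0.le htri _ _
    have h2 : ∑ i ∈ Finset.univ.filter (fun i => ¬ (β * ℓ V ≤ ℓ (v i))), ℓ (v i)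
        ≤ (Finset.univ.filter (fun i => ¬ (β * ℓ V ≤ ℓ (v i)))).card • (β * ℓ V) := by
      apply Finset.sum_le_card_nsmul
      intro i hi
      have := Finset.mem_filter.1 hi
      linarith [lt_of_not_ge this.2]
    have h3 : ((Finset.univ.filter (fun i => ¬ (β * ℓ V ≤ ℓ (v i)))).card : ℝ) ≤ k := by
      exact_mod_cast (Finset.card_filter_le _ _).trans_eq (Finset.card_univ.trans (Fintype.card_fin k))
    have hβV : 0 ≤ β * ℓ V := mul_nonneg hβ0.le (hnn V)
    calc ℓ (∑ i ∈ Finset.univ.filter (fun i => ¬ (β * ℓ V ≤ ℓ (v i))), v i)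
        ≤ (Finset.univ.filter (fun i => ¬ (β * ℓ V ≤ ℓ (v i)))).card • (β * ℓ V) :=
          h1.trans h2
      _ ≤ (k : ℝ) * (β * ℓ V) := by
          rw [nsmul_eq_mul]
          exact mul_le_mul_of_nonneg_right h3 hβV
  have htriV : ℓ V ≤ ℓ V' + ℓ (∑ i ∈ Finset.univ.filter (fun i => ¬ (β * ℓ V ≤ ℓ (v i))), v i) := by
    conv_lhs => rw [hsum]
    exact htri _ _
  nlinarith [hnn V]
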